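/- Suppose βₙ is a sequence of random vectors in ℝ^q each lying (with probability 1) in the set Cₙ = {β : (β − β̂ₙ)ᵀXₙᵀXₙ(β − β̂ₙ) ≤ q·σ̂ₙ²·Fₙ} where Fₙ/n → 0, σ̂ₙ² → σ² > 0 in probability, (1/n)XₙᵀXₙ → D positive definite, and β̂ₙ → βᵗ in probability. Then βₙ → βᵗ in probability. -/

import Mathlib

open Matrix MeasureTheory Filter

lemma euclid_norm_sq_dot (q : ℕ) (x y : EuclideanSpace ℝ (Fin q)) :
    ‖x - y‖ ^ 2 = (fun i => x i - y i) ⬝ᵥ (fun i => x i - y i) := by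
  rw [EuclideanSpace.norm_eq, Real.sq_sqrt (by positivity)]
  simp [dotProduct, sq]

set_option maxHeartbeats 2000000

/-- Random vectors lying in shrinking confidence ellipsoids centered at consistent
estimators are themselves consistent. -/
theorem cmc_solution_consistent (q : ℕ) (hq : 1 ≤ q)
    (Ω : ℕ → Type*) [∀ n, MeasurableSpace (Ω n)]
    (P : ∀ n, Measure (Ω n)) [∀ n, IsProbabilityMeasure (P n)]
    (X : ∀ n : ℕ, Matrix (Fin n) (Fin q) ℝ)
    (D : Matrix (Fin q) (Fin q) ℝ) (hD : D.PosDef) (μ : ℝ) (hμ : 0 < μ)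
    (hmin : ∀ v : Fin q → ℝ, μ * (v ⬝ᵥ v) ≤ v ⬝ᵥ D.mulVec v)
    (hDconv : ∀ i j : Fin q,
      Tendsto (fun n : ℕ => (n : ℝ)⁻¹ * ((X n)ᵀ * X n) i j) atTop (nhds (D i j)))
    (bhat : ∀ n, Ω n → EuclideanSpace ℝ (Fin q))
    (hbhatmeas : ∀ n, Measurable (bhat n))
    (βt : EuclideanSpace ℝ (Fin q))
    (hbhatconv : ∀ ε : ℝ, 0 < ε →
      Tendsto (fun n => (P n {ω | ε < ‖bhat n ω - βt‖}).toReal) atTop (nhds 0))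
    (s : ∀ n, Ω n → ℝ) (hsmeas : ∀ n, Measurable (s n))
    (hspos : ∀ n ω, 0 < s n ω)
    (σ2 : ℝ) (hσ2 : 0 < σ2)
    (hsconv : ∀ ε : ℝ, 0 < ε →
      Tendsto (fun n => (P n {ω | ε < |s n ω - σ2|}).toReal) atTop (nhds 0))
    (F : ℕ → ℝ) (hF : Tendsto (fun n : ℕ => F n / n) atTop (nhds 0))
    (b : ∀ n, Ω n → EuclideanSpace ℝ (Fin q))
    (hbmeas : ∀ n, Measurable (b n))
    (hconstraint : ∀ n, ∀ᵐ ω ∂(P n),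
      (fun i => b n ω i - bhat n ω i) ⬝ᵥ
          ((X n)ᵀ * X n).mulVec (fun i => b n ω i - bhat n ω i) ≤
        q * s n ω * F n) :
    ∀ ε : ℝ, 0 < ε →
      Tendsto (fun n => (P n {ω | ε < ‖b n ω - βt‖}).toReal) atTop (nhds 0) := by
  intro ε hε
  set M : ∀ n : ℕ, Matrix (Fin q) (Fin q) ℝ := fun n => (X n)ᵀ * X n with hMdef
  set δ : ℕ → ℝ := fun n => ∑ i : Fin q, ∑ j : Fin q, |(n : ℝ)⁻¹ * M n i j - D i j|
    with hδdef
  -- δ → 0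
  have hδ : Tendsto δ atTop (nhds 0) := by
    have h0 : Tendsto δ atTop (nhds (∑ i : Fin q, ∑ j : Fin q, (0 : ℝ))) := by
      apply tendsto_finset_sum; intro i _
      apply tendsto_finset_sum; intro j _
      have := ((hDconv i j).sub (tendsto_const_nhds (x := D i j))).abs
      simpa using this
    simpa using h0
  have hvv : ∀ v : Fin q → ℝ, (0 : ℝ) ≤ v ⬝ᵥ v := fun v =>
    Finset.sum_nonneg fun i _ => mul_self_nonneg _
  -- |v i * v j| ≤ v⬝v
  have hij : ∀ (v : Fin q → ℝ) (i j : Fin q), |v i * v j| ≤ v ⬝ᵥ v := by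
    intro v i j
    have hi : v i * v i ≤ v ⬝ᵥ v :=
      Finset.single_le_sum (fun k _ => mul_self_nonneg (v k)) (Finset.mem_univ i)
    have hj : v j * v j ≤ v ⬝ᵥ v :=
      Finset.single_le_sum (fun k _ => mul_self_nonneg (v k)) (Finset.mem_univ j)
    rw [abs_le]
    constructor <;> nlinarith [sq_nonneg (v i + v j), sq_nonneg (v i - v j)]
  -- quadratic form lower bound
  have quad : ∀ (n : ℕ) (v : Fin q → ℝ),
      (μ - δ n) * (v ⬝ᵥ v) ≤ v ⬝ᵥ (((n : ℝ)⁻¹ • M n).mulVec v) := by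
    intro n v
    have e1 : v ⬝ᵥ (((n : ℝ)⁻¹ • M n).mulVec v) - v ⬝ᵥ D.mulVec v
        = ∑ i : Fin q, ∑ j : Fin q, v i * ((n : ℝ)⁻¹ * M n i j - D i j) * v j := by
      simp only [dotProduct, Matrix.mulVec, Matrix.smul_apply, smul_eq_mul,
        Finset.mul_sum, ← Finset.sum_sub_distrib]
      apply Finset.sum_congr rfl; intro i _
      apply Finset.sum_congr rfl; intro j _
      ring
    have habs : |v ⬝ᵥ (((n : ℝ)⁻¹ • M n).mulVec v) - v ⬝ᵥ D.mulVec v|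
        ≤ δ n * (v ⬝ᵥ v) := by
      rw [e1, hδdef]
      calc |∑ i : Fin q, ∑ j : Fin q, v i * ((n : ℝ)⁻¹ * M n i j - D i j) * v j|
          ≤ ∑ i : Fin q, ∑ j : Fin q, |v i * ((n : ℝ)⁻¹ * M n i j - D i j) * v j| := by
            refine (Finset.abs_sum_le_sum_abs _ _).trans ?_
            apply Finset.sum_le_sum; intro i _
            exact Finset.abs_sum_le_sum_abs _ _
        _ ≤ ∑ i : Fin q, ∑ j : Fin q, |(n : ℝ)⁻¹ * M n i j - D i j| * (v ⬝ᵥ v) := by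
            apply Finset.sum_le_sum; intro i _
            apply Finset.sum_le_sum; intro j _
            have : |v i * ((n : ℝ)⁻¹ * M n i j - D i j) * v j|
                = |(n : ℝ)⁻¹ * M n i j - D i j| * |v i * v j| := by
              rw [abs_mul, abs_mul, abs_mul]; ring
            rw [this]
            exact mul_le_mul_of_nonneg_left (hij v i j) (abs_nonneg _)
        _ = (∑ i : Fin q, ∑ j : Fin q, |(n : ℝ)⁻¹ * M n i j - D i j|) * (v ⬝ᵥ v) := by
            rw [Finset.sum_mul]
            apply Finset.sum_congr rfl; intro i _
            rw [Finset.sum_mul]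
    have h2 := (abs_le.mp habs).1
    have h3 := hmin v
    nlinarith [h2, h3]
  -- the comparison sequence
  have hbound : Tendsto (fun n => (P n {ω | ε / 2 < ‖bhat n ω - βt‖}).toReal
      + (P n {ω | 1 < |s n ω - σ2|}).toReal) atTop (nhds 0) := by
    have := (hbhatconv (ε / 2) (by linarith)).add (hsconv 1 one_pos)
    simpa using this
  -- eventual facts
  have hE1 : ∀ᶠ n : ℕ in atTop, δ n ≤ μ / 2 :=
    hδ.eventually (eventually_le_nhds (by linarith))
  have hE2 : ∀ᶠ n : ℕ in atTop,
      (2 * q * (σ2 + 1) / μ) * |F n / n| < (ε / 2) ^ 2 := by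
    have h : Tendsto (fun n : ℕ => (2 * q * (σ2 + 1) / μ) * |F n / n|) atTop
        (nhds 0) := by
      have := (tendsto_const_nhds (x := (2 * q * (σ2 + 1) / μ))
        (f := atTop (α := ℕ))).mul hF.abs
      simpa using this
    exact h.eventually (eventually_lt_nhds (by positivity))
  have hE3 : ∀ᶠ n : ℕ in atTop, 1 ≤ n := eventually_ge_atTop 1
  -- squeeze
  apply squeeze_zero' (f := fun n => (P n {ω | ε < ‖b n ω - βt‖}).toReal)
    (g := fun n => (P n {ω | ε / 2 < ‖bhat n ω - βt‖}).toReal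
      + (P n {ω | 1 < |s n ω - σ2|}).toReal)
  · exact Eventually.of_forall fun n => ENNReal.toReal_nonneg
  · filter_upwards [hE1, hE2, hE3] with n h1 h2 h3
    -- a.e. inclusion
    have hsub : ∀ᵐ ω ∂(P n), ω ∈ {ω | ε < ‖b n ω - βt‖} →
        ω ∈ ({ω | ε / 2 < ‖bhat n ω - βt‖} ∪ {ω | 1 < |s n ω - σ2|}) := by
      filter_upwards [hconstraint n] with ω hω hA
      by_contra hc
      simp only [Set.mem_union, Set.mem_setOf_eq, not_or, not_lt] at hc
      obtain ⟨hb1, hs1⟩ := hc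
      set v : Fin q → ℝ := fun i => b n ω i - bhat n ω i with hvdef
      have hn0 : (0 : ℝ) < n := by exact_mod_cast h3
      -- lower bound on quadratic form
      have hq1 : (n : ℝ) * (μ / 2) * (v ⬝ᵥ v) ≤ v ⬝ᵥ (M n).mulVec v := by
        have h5 := quad n v
        have h6 : v ⬝ᵥ (((n : ℝ)⁻¹ • M n).mulVec v)
            = (n : ℝ)⁻¹ * (v ⬝ᵥ (M n).mulVec v) := by
          rw [Matrix.smul_mulVec, dotProduct_smul, smul_eq_mul]
        rw [h6] at h5
        have h7 : (μ / 2) * (v ⬝ᵥ v) ≤ (n : ℝ)⁻¹ * (v ⬝ᵥ (M n).mulVec v) := by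
          have := mul_le_mul_of_nonneg_right (sub_le_sub_left h1 μ) (hvv v)
          linarith
        have h10 := mul_le_mul_of_nonneg_left h7 hn0.le
        have h8 : (n : ℝ) * ((n : ℝ)⁻¹ * (v ⬝ᵥ (M n).mulVec v))
            = v ⬝ᵥ (M n).mulVec v := by
          field_simp
        rw [h8] at h10
        linarith [h10]
      -- upper bound from constraint
      have hs2 : s n ω ≤ σ2 + 1 := by
        have := (abs_le.mp hs1).2; linarith
      have hF1 : (q : ℝ) * s n ω * F n ≤ q * (σ2 + 1) * |F n| := by
        have hq0 : (0 : ℝ) ≤ q := Nat.cast_nonneg q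
        have h8 : s n ω * F n ≤ (σ2 + 1) * |F n| := by
          have := le_abs_self (F n)
          nlinarith [(hspos n ω), abs_nonneg (F n)]
        nlinarith [h8, hq0]
      have hchain : (n : ℝ) * (μ / 2) * (v ⬝ᵥ v) ≤ (q : ℝ) * (σ2 + 1) * |F n| :=
        le_trans hq1 (le_trans hω hF1)
      -- |F n / n| = |F n| / n
      have habsn : |F n / (n : ℝ)| = |F n| / n := by
        rw [abs_div, abs_of_pos hn0]
      rw [habsn] at h2
      -- conclude v⬝v < (ε/2)^2
      have hS : v ⬝ᵥ v < (ε / 2) ^ 2 := by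
        have h9 : 2 * (q : ℝ) * (σ2 + 1) * |F n| < (ε / 2) ^ 2 * μ * n := by
          have hμn : (0 : ℝ) < μ * n := mul_pos hμ hn0
          have h11 := mul_lt_mul_of_pos_right h2 hμn
          calc 2 * (q : ℝ) * (σ2 + 1) * |F n|
              = (2 * (q : ℝ) * (σ2 + 1) / μ * (|F n| / n)) * (μ * n) := by
                field_simp
            _ < (ε / 2) ^ 2 * (μ * n) := h11
            _ = (ε / 2) ^ 2 * μ * n := by ring
        nlinarith [hchain, h9, mul_pos hμ hn0, hvv v]
      -- v⬝v = ‖b - bhat‖^2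
      have hnorm : ‖b n ω - bhat n ω‖ ^ 2 = v ⬝ᵥ v :=
        euclid_norm_sq_dot q (b n ω) (bhat n ω)
      have hlt : ‖b n ω - bhat n ω‖ < ε / 2 := by
        have hsq : ‖b n ω - bhat n ω‖ ^ 2 < (ε / 2) ^ 2 := by
          rw [hnorm]; exact hS
        exact lt_of_pow_lt_pow_left₀ 2 (by linarith) hsq
      have htri : ‖b n ω - βt‖ ≤ ‖b n ω - bhat n ω‖ + ‖bhat n ω - βt‖ :=
        norm_sub_le_norm_sub_add_norm_sub _ _ _
      have : ‖b n ω - βt‖ < ε := by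
        have hA' : ε < ‖b n ω - βt‖ := hA
        linarith [htri, hlt, hb1]
      exact absurd hA (by push_neg; linarith)
    have hle : P n {ω | ε < ‖b n ω - βt‖}
        ≤ P n {ω | ε / 2 < ‖bhat n ω - βt‖} + P n {ω | 1 < |s n ω - σ2|} :=
      le_trans (measure_mono_ae hsub) (measure_union_le _ _)
    calc (P n {ω | ε < ‖b n ω - βt‖}).toReal
        ≤ (P n {ω | ε / 2 < ‖bhat n ω - βt‖} + P n {ω | 1 < |s n ω - σ2|}).toReal :=
          ENNReal.toReal_mono (by finiteness) hle
      _ = (P n {ω | ε / 2 < ‖bhat n ω - βt‖}).toReal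
          + (P n {ω | 1 < |s n ω - σ2|}).toReal :=
          ENNReal.toReal_add (measure_ne_top _ _) (measure_ne_top _ _)
  · exact hbound
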